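/- Suppose in addition that 1/(1+ε) ≤ π_b(a|s)/π_b(a|s,u) ≤ 1+ε for all s, a, u, where ε > 0 (i.e. the sensitivity bounds hold with α(s,a) = 1/(1+ε) and β(s,a) = 1+ε). Then the infinite-data FQE point estimate satisfies, for every state s: (1 + εH − (1+ε)^H)/ε ≤ V_1(s) − Σ_a π_e(a|s) f̂_1(s,a) ≤ ((1+ε)^{−H} − (1 − εH))/ε. -/
import Mathlib


open Finset

noncomputable section

variable {S U A : Type*}

/-- Marginalized (observed) behavior policy `π_b(a|s) = Σ_u P(u|s) π_b(a|s,u)`. -/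
def piMarg [Fintype U] (Pu : S → U → ℝ) (pib : S → U → A → ℝ) (s : S) (a : A) : ℝ :=
  ∑ u, Pu s u * pib s u a

/-- Marginalized transition kernel `P(s'|s,a) = Σ_u P(u|s) T(s'|s,u,a)`. -/
def margKer [Fintype U] (Pu : S → U → ℝ) (T : S → U → A → S → ℝ)
    (s : S) (a : A) (s' : S) : ℝ :=
  ∑ u, Pu s u * T s u a s'

/-- Confounded observed kernel `P^b(s'|s,a) = Σ_u P(u|s)·(π_b(a|s,u)/π_b(a|s))·T(s'|s,u,a)`. -/
def confKer [Fintype U] (Pu : S → U → ℝ) (pib : S → U → A → ℝ) (T : S → U → A → S → ℝ)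
    (s : S) (a : A) (s' : S) : ℝ :=
  ∑ u, Pu s u * (pib s u a / piMarg Pu pib s a) * T s u a s'

/-- Bellman value of the evaluation policy under kernel `P`, indexed by the number of
remaining steps: `Vaux P r πe k = V_{H+1-k}` (so `Vaux _ _ _ 0 = V_{H+1} = 0`). -/
def Vaux [Fintype S] [Fintype A] (P : S → A → S → ℝ) (r : S → A → ℝ) (pie : S → A → ℝ) :
    ℕ → S → ℝ
  | 0 => fun _ => 0
  | (k + 1) => fun s => ∑ a, pie s a * (r s a + ∑ s', P s a s' * Vaux P r pie k s')

/-- Bellman Q-value with `k` remaining steps *after* the current one: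
`Qaux P r πe k = Q_{H-k}`, i.e. `Q_h(s,a) = r(s,a) + Σ_{s'} P(s'|s,a) V_{h+1}(s')`. -/
def Qaux [Fintype S] [Fintype A] (P : S → A → S → ℝ) (r : S → A → ℝ) (pie : S → A → ℝ)
    (k : ℕ) (s : S) (a : A) : ℝ :=
  r s a + ∑ s', P s a s' * Vaux P r pie k s'

/-- Infinite-data FQE iterates indexed by remaining steps: `fqeAux Pb r πe k = f̂_{H+1-k}`,
so `f̂_{H+1} = 0` and `f̂_h(s,a) = r(s,a) + Σ_{s'} P^b(s'|s,a) Σ_{a'} π_e(a'|s') f̂_{h+1}(s',a')`. -/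
def fqeAux [Fintype S] [Fintype A] (Pb : S → A → S → ℝ) (r : S → A → ℝ) (pie : S → A → ℝ) :
    ℕ → S → A → ℝ
  | 0 => fun _ _ => 0
  | (k + 1) => fun s a => r s a + ∑ s', Pb s a s' * ∑ a', pie s' a' * fqeAux Pb r pie k s' a'

lemma Vaux_nonneg [Fintype S] [Fintype A] (P : S → A → S → ℝ) (r : S → A → ℝ)
    (pie : S → A → ℝ) (hP0 : ∀ s a s', 0 ≤ P s a s')
    (hr0 : ∀ s a, 0 ≤ r s a) (hpie0 : ∀ s a, 0 ≤ pie s a) :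
    ∀ k s, 0 ≤ Vaux P r pie k s := by
  intro k
  induction k with
  | zero => intro s; simp [Vaux]
  | succ k ih =>
    intro s
    apply Finset.sum_nonneg
    intro a _
    exact mul_nonneg (hpie0 s a) (add_nonneg (hr0 s a)
      (Finset.sum_nonneg fun s' _ => mul_nonneg (hP0 s a s') (ih s')))

lemma Vaux_le [Fintype S] [Fintype A] (P : S → A → S → ℝ) (r : S → A → ℝ)
    (pie : S → A → ℝ) (hP0 : ∀ s a s', 0 ≤ P s a s') (hP1 : ∀ s a, ∑ s', P s a s' = 1)
    (hr0 : ∀ s a, 0 ≤ r s a) (hr1 : ∀ s a, r s a ≤ 1)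
    (hpie0 : ∀ s a, 0 ≤ pie s a) (hpie1 : ∀ s, ∑ a, pie s a = 1) :
    ∀ k s, Vaux P r pie k s ≤ k := by
  intro k
  induction k with
  | zero => intro s; simp [Vaux]
  | succ k ih =>
    intro s
    have : ∀ a, pie s a * (r s a + ∑ s', P s a s' * Vaux P r pie k s')
        ≤ pie s a * ((k : ℝ) + 1) := by
      intro a
      apply mul_le_mul_of_nonneg_left _ (hpie0 s a)
      have h2 : ∑ s', P s a s' * Vaux P r pie k s' ≤ ∑ s', P s a s' * (k : ℝ) := by
        apply Finset.sum_le_sum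
        intro s' _
        exact mul_le_mul_of_nonneg_left (ih s') (hP0 s a s')
      have h3 : ∑ s', P s a s' * (k : ℝ) = (k : ℝ) := by
        rw [← Finset.sum_mul, hP1, one_mul]
      have := hr1 s a
      linarith
    calc Vaux P r pie (k + 1) s ≤ ∑ a, pie s a * ((k : ℝ) + 1) :=
          Finset.sum_le_sum fun a _ => this a
      _ = (k : ℝ) + 1 := by rw [← Finset.sum_mul, hpie1, one_mul]
      _ = ((k + 1 : ℕ) : ℝ) := by push_cast; ring

lemma fqeAux_nonneg [Fintype S] [Fintype A] (Pb : S → A → S → ℝ) (r : S → A → ℝ)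
    (pie : S → A → ℝ) (hPb0 : ∀ s a s', 0 ≤ Pb s a s')
    (hr0 : ∀ s a, 0 ≤ r s a) (hpie0 : ∀ s a, 0 ≤ pie s a) :
    ∀ k s a, 0 ≤ fqeAux Pb r pie k s a := by
  intro k
  induction k with
  | zero => intro s a; simp [fqeAux]
  | succ k ih =>
    intro s a
    apply add_nonneg (hr0 s a)
    apply Finset.sum_nonneg
    intro s' _
    exact mul_nonneg (hPb0 s a s')
      (Finset.sum_nonneg fun a' _ => mul_nonneg (hpie0 s' a') (ih s' a'))

lemma key [Fintype S] [Fintype A]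
    (P Pb : S → A → S → ℝ) (r : S → A → ℝ) (pie : S → A → ℝ) (ε : ℝ) (hε : 0 < ε)
    (hP0 : ∀ s a s', 0 ≤ P s a s') (hP1 : ∀ s a, ∑ s', P s a s' = 1)
    (hlow : ∀ s a s', (1 + ε)⁻¹ * P s a s' ≤ Pb s a s')
    (hup : ∀ s a s', Pb s a s' ≤ (1 + ε) * P s a s')
    (hr0 : ∀ s a, 0 ≤ r s a) (hr1 : ∀ s a, r s a ≤ 1)
    (hpie0 : ∀ s a, 0 ≤ pie s a) (hpie1 : ∀ s, ∑ a, pie s a = 1) :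
    ∀ (k : ℕ) (s : S),
      (1 + ε * k - (1 + ε) ^ k) / ε ≤
          Vaux P r pie k s - ∑ a, pie s a * fqeAux Pb r pie k s a ∧
        Vaux P r pie k s - ∑ a, pie s a * fqeAux Pb r pie k s a ≤
          (((1 + ε) ^ k)⁻¹ - (1 - ε * k)) / ε := by
  have hε1 : (0:ℝ) < 1 + ε := by linarith
  have hγ0 : (0:ℝ) ≤ (1 + ε)⁻¹ := by positivity
  have hγ1 : (1 + ε)⁻¹ ≤ 1 := by
    rw [inv_le_one_iff₀]; right; linarith
  have hPb0 : ∀ s a s', 0 ≤ Pb s a s' := fun s a s' =>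
    le_trans (mul_nonneg hγ0 (hP0 s a s')) (hlow s a s')
  have hV0 := Vaux_nonneg P r pie hP0 hr0 hpie0
  have hVk := Vaux_le P r pie hP0 hP1 hr0 hr1 hpie0 hpie1
  have hf0 := fqeAux_nonneg Pb r pie hPb0 hr0 hpie0
  intro k
  induction k with
  | zero =>
    intro s
    simp [Vaux, fqeAux]
  | succ k ih =>
    intro s
    set L : ℝ := (1 + ε * k - (1 + ε) ^ k) / ε with hL
    set B : ℝ := (((1 + ε) ^ k)⁻¹ - (1 - ε * k)) / ε with hB
    set W : S → ℝ := fun s' => ∑ a', pie s' a' * fqeAux Pb r pie k s' a' with hW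
    have hW0 : ∀ s', 0 ≤ W s' := fun s' =>
      Finset.sum_nonneg fun a' _ => mul_nonneg (hpie0 s' a') (hf0 k s' a')
    -- rewrite the difference as a sum over a of pie * (inner difference)
    have hdiff : Vaux P r pie (k + 1) s - ∑ a, pie s a * fqeAux Pb r pie (k + 1) s a
        = ∑ a, pie s a *
          ((∑ s', P s a s' * Vaux P r pie k s') - ∑ s', Pb s a s' * W s') := by
      show (∑ a, pie s a * (r s a + ∑ s', P s a s' * Vaux P r pie k s'))
        - ∑ a, pie s a * (r s a + ∑ s', Pb s a s' * W s') = _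
      rw [← Finset.sum_sub_distrib]
      apply Finset.sum_congr rfl
      intro a _
      ring
    -- inner bounds
    have hinner_up : ∀ a,
        (∑ s', P s a s' * Vaux P r pie k s') - ∑ s', Pb s a s' * W s'
          ≤ (1 + ε)⁻¹ * B + (1 - (1 + ε)⁻¹) * k := by
      intro a
      have h1 : ∑ s', ((1 + ε)⁻¹ * P s a s') * W s' ≤ ∑ s', Pb s a s' * W s' :=
        Finset.sum_le_sum fun s' _ =>
          mul_le_mul_of_nonneg_right (hlow s a s') (hW0 s')
      have h2 : (∑ s', P s a s' * Vaux P r pie k s')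
          - ∑ s', ((1 + ε)⁻¹ * P s a s') * W s'
          = ∑ s', P s a s' * (Vaux P r pie k s' - (1 + ε)⁻¹ * W s') := by
        rw [← Finset.sum_sub_distrib]
        exact Finset.sum_congr rfl fun s' _ => by ring
      have h3 : ∑ s', P s a s' * (Vaux P r pie k s' - (1 + ε)⁻¹ * W s')
          ≤ ∑ s', P s a s' * ((1 + ε)⁻¹ * B + (1 - (1 + ε)⁻¹) * k) := by
        apply Finset.sum_le_sum
        intro s' _
        apply mul_le_mul_of_nonneg_left _ (hP0 s a s')
        have hΔ := (ih s').2
        have hVle := hVk k s'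
        nlinarith [hγ0, hγ1]
      have h4 : ∑ s', P s a s' * ((1 + ε)⁻¹ * B + (1 - (1 + ε)⁻¹) * k)
          = (1 + ε)⁻¹ * B + (1 - (1 + ε)⁻¹) * k := by
        rw [← Finset.sum_mul, hP1, one_mul]
      linarith
    have hinner_low : ∀ a,
        (1 + ε) * L - ε * k ≤
          (∑ s', P s a s' * Vaux P r pie k s') - ∑ s', Pb s a s' * W s' := by
      intro a
      have h1 : ∑ s', Pb s a s' * W s' ≤ ∑ s', ((1 + ε) * P s a s') * W s' :=
        Finset.sum_le_sum fun s' _ =>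
          mul_le_mul_of_nonneg_right (hup s a s') (hW0 s')
      have h2 : (∑ s', P s a s' * Vaux P r pie k s')
          - ∑ s', ((1 + ε) * P s a s') * W s'
          = ∑ s', P s a s' * (Vaux P r pie k s' - (1 + ε) * W s') := by
        rw [← Finset.sum_sub_distrib]
        exact Finset.sum_congr rfl fun s' _ => by ring
      have h3 : ∑ s', P s a s' * ((1 + ε) * L - ε * k)
          ≤ ∑ s', P s a s' * (Vaux P r pie k s' - (1 + ε) * W s') := by
        apply Finset.sum_le_sum
        intro s' _
        apply mul_le_mul_of_nonneg_left _ (hP0 s a s')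
        have hΔ := (ih s').1
        have hVle := hVk k s'
        nlinarith
      have h4 : ∑ s', P s a s' * ((1 + ε) * L - ε * k) = (1 + ε) * L - ε * k := by
        rw [← Finset.sum_mul, hP1, one_mul]
      linarith
    constructor
    · rw [hdiff]
      have hsum : ∑ a, pie s a * ((1 + ε) * L - ε * k)
          ≤ ∑ a, pie s a *
            ((∑ s', P s a s' * Vaux P r pie k s') - ∑ s', Pb s a s' * W s') :=
        Finset.sum_le_sum fun a _ =>
          mul_le_mul_of_nonneg_left (hinner_low a) (hpie0 s a)
      have heq : ∑ a, pie s a * ((1 + ε) * L - ε * k) = (1 + ε) * L - ε * k := by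
        rw [← Finset.sum_mul, hpie1, one_mul]
      have halg : (1 + ε * (k + 1 : ℕ) - (1 + ε) ^ (k + 1)) / ε
          = (1 + ε) * L - ε * k := by
        rw [hL]
        push_cast
        field_simp
        ring
      rw [halg]
      linarith
    · rw [hdiff]
      have hsum : ∑ a, pie s a *
            ((∑ s', P s a s' * Vaux P r pie k s') - ∑ s', Pb s a s' * W s')
          ≤ ∑ a, pie s a * ((1 + ε)⁻¹ * B + (1 - (1 + ε)⁻¹) * k) :=
        Finset.sum_le_sum fun a _ =>
          mul_le_mul_of_nonneg_left (hinner_up a) (hpie0 s a)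
      have heq : ∑ a, pie s a * ((1 + ε)⁻¹ * B + (1 - (1 + ε)⁻¹) * k)
          = (1 + ε)⁻¹ * B + (1 - (1 + ε)⁻¹) * k := by
        rw [← Finset.sum_mul, hpie1, one_mul]
      have halg : (1 + ε)⁻¹ * B + (1 - (1 + ε)⁻¹) * (k : ℝ)
          ≤ (((1 + ε) ^ (k + 1))⁻¹ - (1 - ε * ((k : ℝ) + 1))) / ε := by
        rw [← sub_nonneg, hB]
        have hx : ((1 + ε) ^ k) ≠ 0 := by positivity
        have hrw : (((1 + ε) ^ (k + 1))⁻¹ - (1 - ε * ((k : ℝ) + 1))) / ε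
            - ((1 + ε)⁻¹ * ((((1 + ε) ^ k)⁻¹ - (1 - ε * (k : ℝ))) / ε)
              + (1 - (1 + ε)⁻¹) * (k : ℝ))
            = (ε + (1 + ε)⁻¹ - 1) / ε := by
          rw [pow_succ, mul_inv]
          field_simp
          ring
        rw [hrw]
        have hi : (1 + ε)⁻¹ * (1 + ε) = 1 := inv_mul_cancel₀ (ne_of_gt hε1)
        apply div_nonneg _ (le_of_lt hε)
        nlinarith [hi]
      push_cast
      linarith

/-- Infinite-data FQE error bounds under the sensitivity model
`1/(1+ε) ≤ π_b(a|s)/π_b(a|s,u) ≤ 1+ε`: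
`(1 + εH − (1+ε)^H)/ε ≤ V_1(s) − Σ_a π_e(a|s) f̂_1(s,a) ≤ ((1+ε)^{−H} − (1 − εH))/ε`. -/
theorem fqe_error_bounds_sensitivity
    [Fintype S] [Fintype U] [Fintype A] [Nonempty S] [Nonempty U] [Nonempty A]
    (H : ℕ) (hH : 1 ≤ H)
    (Pu : S → U → ℝ) (hPu0 : ∀ s u, 0 ≤ Pu s u) (hPu1 : ∀ s, ∑ u, Pu s u = 1)
    (T : S → U → A → S → ℝ) (hT0 : ∀ s u a s', 0 ≤ T s u a s')
    (hT1 : ∀ s u a, ∑ s', T s u a s' = 1)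
    (r : S → A → ℝ) (hr0 : ∀ s a, 0 ≤ r s a) (hr1 : ∀ s a, r s a ≤ 1)
    (pib : S → U → A → ℝ) (hpib0 : ∀ s u a, 0 < pib s u a)
    (hpib1 : ∀ s u, ∑ a, pib s u a = 1)
    (pie : S → A → ℝ) (hpie0 : ∀ s a, 0 ≤ pie s a) (hpie1 : ∀ s, ∑ a, pie s a = 1)
    (ε : ℝ) (hε : 0 < ε)
    (hsens : ∀ s u a, 1 / (1 + ε) ≤ piMarg Pu pib s a / pib s u a ∧
      piMarg Pu pib s a / pib s u a ≤ 1 + ε) :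
    ∀ s : S,
      (1 + ε * H - (1 + ε) ^ H) / ε ≤
          Vaux (margKer Pu T) r pie H s -
            ∑ a, pie s a * fqeAux (confKer Pu pib T) r pie H s a ∧
        Vaux (margKer Pu T) r pie H s -
            ∑ a, pie s a * fqeAux (confKer Pu pib T) r pie H s a ≤
          (((1 + ε) ^ H)⁻¹ - (1 - ε * H)) / ε := by
  have hε1 : (0:ℝ) < 1 + ε := by linarith
  have hγ0 : (0:ℝ) ≤ (1 + ε)⁻¹ := by positivity
  have hP0 : ∀ s a s', 0 ≤ margKer Pu T s a s' := fun s a s' =>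
    Finset.sum_nonneg fun u _ => mul_nonneg (hPu0 s u) (hT0 s u a s')
  have hP1 : ∀ s a, ∑ s', margKer Pu T s a s' = 1 := by
    intro s a
    simp only [margKer]
    rw [Finset.sum_comm]
    have h : ∀ u : U, ∑ s', Pu s u * T s u a s' = Pu s u := fun u => by
      rw [← Finset.mul_sum, hT1, mul_one]
    simp only [h, hPu1]
  have hm : ∀ s (u : U) a, 0 < piMarg Pu pib s a := by
    intro s u a
    have h1 := (hsens s u a).1
    have hp := hpib0 s u a
    have h2 : 0 < piMarg Pu pib s a / pib s u a :=
      lt_of_lt_of_le (by positivity) h1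
    have h3 := mul_pos h2 hp
    rwa [div_mul_cancel₀ _ (ne_of_gt hp)] at h3
  have hratio : ∀ s (u : U) a,
      (1 + ε)⁻¹ ≤ pib s u a / piMarg Pu pib s a ∧
        pib s u a / piMarg Pu pib s a ≤ 1 + ε := by
    intro s u a
    have hp := hpib0 s u a
    have hms := hm s u a
    obtain ⟨h1, h2⟩ := hsens s u a
    rw [div_le_iff₀ hp] at h2
    rw [one_div, le_div_iff₀ hp, inv_mul_le_iff₀ hε1] at h1
    constructor
    · rw [le_div_iff₀ hms]
      calc (1 + ε)⁻¹ * piMarg Pu pib s a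
          ≤ (1 + ε)⁻¹ * ((1 + ε) * pib s u a) :=
            mul_le_mul_of_nonneg_left h2 hγ0
        _ = pib s u a := by field_simp
    · rw [div_le_iff₀ hms]
      linarith
  have hlow : ∀ s a s', (1 + ε)⁻¹ * margKer Pu T s a s' ≤ confKer Pu pib T s a s' := by
    intro s a s'
    rw [margKer, confKer, Finset.mul_sum]
    apply Finset.sum_le_sum
    intro u _
    have h0 : 0 ≤ Pu s u * T s u a s' := mul_nonneg (hPu0 s u) (hT0 s u a s')
    calc (1 + ε)⁻¹ * (Pu s u * T s u a s')
        ≤ (pib s u a / piMarg Pu pib s a) * (Pu s u * T s u a s') :=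
          mul_le_mul_of_nonneg_right (hratio s u a).1 h0
      _ = Pu s u * (pib s u a / piMarg Pu pib s a) * T s u a s' := by ring
  have hup : ∀ s a s', confKer Pu pib T s a s' ≤ (1 + ε) * margKer Pu T s a s' := by
    intro s a s'
    rw [margKer, confKer, Finset.mul_sum]
    apply Finset.sum_le_sum
    intro u _
    have h0 : 0 ≤ Pu s u * T s u a s' := mul_nonneg (hPu0 s u) (hT0 s u a s')
    calc Pu s u * (pib s u a / piMarg Pu pib s a) * T s u a s'
        = (pib s u a / piMarg Pu pib s a) * (Pu s u * T s u a s') := by ring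
      _ ≤ (1 + ε) * (Pu s u * T s u a s') :=
          mul_le_mul_of_nonneg_right (hratio s u a).2 h0
  exact fun s =>
    key (margKer Pu T) (confKer Pu pib T) r pie ε hε hP0 hP1 hlow hup hr0 hr1
      hpie0 hpie1 H s
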